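/- If f - f' ∈ p·ℤ_p[[z]] for formal power series f, f' over ℚ_p with zero constant term, and exp(f) ∈ ℤ_p[[z]], then exp(f') ∈ ℤ_p[[z]]. -/

import Mathlib

open PowerSeries Finset
open IsUltrametricDist

lemma aux_coeff_pow_eq_zero {R : Type*} [CommRing R] {h : PowerSeries R}
    (h0 : PowerSeries.constantCoeff h = 0) {m k : ℕ} (hmk : m < k) :
    PowerSeries.coeff m (h ^ k) = 0 := by
  have hdvd : (PowerSeries.X : PowerSeries R) ^ k ∣ h ^ k :=
    pow_dvd_pow_of_dvd (PowerSeries.X_dvd_iff.mpr h0) k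
  exact (PowerSeries.X_pow_dvd_iff.mp hdvd) m hmk

lemma aux_norm_coeff_pow (p : ℕ) [Fact p.Prime] (g : PowerSeries ℚ_[p])
    (hg : ∀ m, ‖PowerSeries.coeff m g‖ ≤ ‖(p : ℚ_[p])‖) (b m : ℕ) :
    ‖PowerSeries.coeff m (g ^ b)‖ ≤ ‖(p : ℚ_[p])‖ ^ b := by
  induction b generalizing m with
  | zero =>
    simp only [pow_zero, PowerSeries.coeff_one]
    split <;> simp
  | succ b ih =>
    rw [pow_succ, PowerSeries.coeff_mul]
    apply norm_sum_le_of_forall_le_of_nonneg (by positivity)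
    intro q hq
    rw [norm_mul, pow_succ]
    exact mul_le_mul (ih q.1) (hg q.2) (norm_nonneg _) (by positivity)

lemma aux_fact_bound (p : ℕ) [hp : Fact p.Prime] (b : ℕ) :
    ‖((b.factorial : ℚ_[p]))⁻¹‖ * ‖(p : ℚ_[p])‖ ^ b ≤ 1 := by
  set v := b.factorial.factorization p with hv
  have hveq : v = padicValNat p b.factorial := Nat.factorization_def _ hp.out
  have hvb : v ≤ b := by
    have h1 := sub_one_mul_padicValNat_factorial (p := p) b
    rw [← hveq] at h1
    have h2 : v ≤ (p - 1) * v := Nat.le_mul_of_pos_left v (by have := hp.out.two_le; omega)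
    omega
  have hfeq : ((b.factorial : ℚ_[p])) = (p : ℚ_[p]) ^ v * ((b.factorial / p ^ v : ℕ) : ℚ_[p]) := by
    rw [← Nat.cast_pow, ← Nat.cast_mul, Nat.ordProj_mul_ordCompl_eq_self]
  have hm1 : ‖((b.factorial / p ^ v : ℕ) : ℚ_[p])‖ = 1 := by
    apply le_antisymm
    · exact_mod_cast Padic.norm_int_le_one ((b.factorial / p ^ v : ℕ) : ℤ)
    · by_contra hlt
      push_neg at hlt
      have := (Padic.norm_intCast_lt_one_iff (k := ((b.factorial / p ^ v : ℕ) : ℤ))).mp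
        (by exact_mod_cast hlt)
      have hdvd : p ∣ b.factorial / p ^ v := by exact_mod_cast this
      exact Nat.not_dvd_ordCompl hp.out (Nat.factorial_pos b).ne' hdvd
  have hnorm : ‖((b.factorial : ℚ_[p]))‖ = ‖(p : ℚ_[p])‖ ^ v := by
    rw [hfeq, norm_mul, norm_pow, hm1, mul_one]
  have hppos : (0 : ℝ) < ‖(p : ℚ_[p])‖ := by
    rw [Padic.norm_p]
    exact inv_pos.mpr (by exact_mod_cast hp.out.pos)
  have hple : ‖(p : ℚ_[p])‖ ≤ 1 := Padic.norm_p_lt_one.le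
  rw [norm_inv, hnorm, mul_comm, ← div_eq_mul_inv, div_le_one (pow_pos hppos v)]
  exact pow_le_pow_of_le_one hppos.le hple hvb

/-- If `f - f' ∈ p·ℤ_p[[z]]` for power series with zero constant term and
`exp(f) ∈ ℤ_p[[z]]`, then `exp(f') ∈ ℤ_p[[z]]`. Here `E = exp(f)` and `E' = exp(f')`
are the formal exponentials, described coefficientwise. -/
theorem exp_integral_of_congruent (p : ℕ) [Fact p.Prime]
    (f f' : PowerSeries ℚ_[p])
    (hf0 : PowerSeries.constantCoeff f = 0)
    (hf'0 : PowerSeries.constantCoeff f' = 0)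
    (hsub : ∀ n : ℕ, ‖PowerSeries.coeff n (f - f')‖ ≤ ‖(p : ℚ_[p])‖)
    (E E' : PowerSeries ℚ_[p])
    (hE : ∀ n : ℕ, PowerSeries.coeff n E =
      ∑ k ∈ Finset.range (n + 1),
        ((k.factorial : ℚ_[p]))⁻¹ * PowerSeries.coeff n (f ^ k))
    (hE' : ∀ n : ℕ, PowerSeries.coeff n E' =
      ∑ k ∈ Finset.range (n + 1),
        ((k.factorial : ℚ_[p]))⁻¹ * PowerSeries.coeff n (f' ^ k))
    (hEint : ∀ n : ℕ, ‖PowerSeries.coeff n E‖ ≤ 1) :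
    ∀ n : ℕ, ‖PowerSeries.coeff n E'‖ ≤ 1 := by
  intro n
  set g : PowerSeries ℚ_[p] := f' - f with hgdef
  have hg0 : PowerSeries.constantCoeff g = 0 := by
    rw [hgdef, map_sub, hf'0, hf0, sub_zero]
  have hgnorm : ∀ m, ‖PowerSeries.coeff m g‖ ≤ ‖(p : ℚ_[p])‖ := by
    intro m
    have h1 : PowerSeries.coeff m g = -(PowerSeries.coeff m (f - f')) := by
      rw [hgdef, map_sub, map_sub]; ring
    rw [h1, norm_neg]; exact hsub m
  set c : ℕ → ℚ_[p] := fun j => ∑ b ∈ range (n + 1),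
      ((b.factorial : ℚ_[p]))⁻¹ * PowerSeries.coeff j (g ^ b) with hcdef
  set T : ℕ × ℕ → ℚ_[p] := fun q =>
      ((q.1.factorial : ℚ_[p]))⁻¹ * ((q.2.factorial : ℚ_[p]))⁻¹ *
        ∑ r ∈ antidiagonal n,
          PowerSeries.coeff r.1 (f ^ q.1) * PowerSeries.coeff r.2 (g ^ q.2)
    with hTdef
  have hT0 : ∀ q : ℕ × ℕ, n < q.1 + q.2 → T q = 0 := by
    intro q hq
    have hz : ∑ r ∈ antidiagonal n,
        PowerSeries.coeff r.1 (f ^ q.1) * PowerSeries.coeff r.2 (g ^ q.2) = 0 := by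
      apply Finset.sum_eq_zero
      intro r hr
      have hr' := Finset.HasAntidiagonal.mem_antidiagonal.mp hr
      rcases lt_or_ge r.1 q.1 with h | h
      · rw [aux_coeff_pow_eq_zero hf0 h, zero_mul]
      · have h2 : r.2 < q.2 := by omega
        rw [aux_coeff_pow_eq_zero hg0 h2, mul_zero]
    simp only [hTdef]
    rw [hz, mul_zero]
  have hf'eq : f' = f + g := by rw [hgdef]; ring
  have hcast : ∀ (φ : PowerSeries ℚ_[p]) (m' k' : ℕ),
      PowerSeries.coeff m' (φ * (k' : PowerSeries ℚ_[p])) =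
        PowerSeries.coeff m' φ * (k' : ℚ_[p]) := by
    intro φ m' k'
    rw [← map_natCast (PowerSeries.C (R := ℚ_[p])) k', PowerSeries.coeff_mul_C]
  have L1 : PowerSeries.coeff n E' = ∑ k ∈ range (n + 1), ∑ q ∈ antidiagonal k, T q := by
    rw [hE' n]
    refine Finset.sum_congr rfl fun k hk => ?_
    rw [Finset.Nat.sum_antidiagonal_eq_sum_range_succ_mk, hf'eq, add_pow, map_sum,
      Finset.mul_sum]
    refine Finset.sum_congr rfl fun a ha => ?_
    have hak : a ≤ k := Nat.lt_succ_iff.mp (Finset.mem_range.mp ha)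
    rw [hcast, PowerSeries.coeff_mul]
    have hfac : ((k.factorial : ℚ_[p]))⁻¹ * ((k.choose a : ℚ_[p])) =
        ((a.factorial : ℚ_[p]))⁻¹ * (((k - a).factorial : ℚ_[p]))⁻¹ := by
      have h := Nat.choose_mul_factorial_mul_factorial hak
      have h' : ((k.choose a : ℚ_[p])) * (a.factorial : ℚ_[p]) * ((k - a).factorial : ℚ_[p])
          = (k.factorial : ℚ_[p]) := by exact_mod_cast congrArg (Nat.cast : ℕ → ℚ_[p]) h
      have ha0 : ((a.factorial : ℚ_[p])) ≠ 0 := Nat.cast_ne_zero.mpr a.factorial_ne_zero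
      have hb0 : (((k - a).factorial : ℚ_[p])) ≠ 0 := Nat.cast_ne_zero.mpr (k - a).factorial_ne_zero
      have hk0 : ((k.factorial : ℚ_[p])) ≠ 0 := Nat.cast_ne_zero.mpr k.factorial_ne_zero
      field_simp
      linear_combination h'
    simp only [hTdef]
    linear_combination (∑ r ∈ antidiagonal n,
      PowerSeries.coeff r.1 (f ^ a) * PowerSeries.coeff r.2 (g ^ (k - a))) * hfac
  have hdisj : (↑(range (n + 1)) : Set ℕ).PairwiseDisjoint (fun k => antidiagonal k) := by
    intro x _ y _ hxy
    rw [Function.onFun, Finset.disjoint_left]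
    intro q hqx hqy
    exact hxy ((Finset.HasAntidiagonal.mem_antidiagonal.mp hqx).symm.trans (Finset.HasAntidiagonal.mem_antidiagonal.mp hqy))
  have hbiU : (range (n + 1)).biUnion (fun k => antidiagonal k) =
      (range (n + 1) ×ˢ range (n + 1)).filter (fun q => q.1 + q.2 ≤ n) := by
    ext q
    simp only [Finset.mem_biUnion, Finset.mem_range, Finset.HasAntidiagonal.mem_antidiagonal,
      Finset.mem_filter, Finset.mem_product]
    constructor
    · rintro ⟨k, hk, he⟩; omega
    · intro h; exact ⟨q.1 + q.2, by omega, rfl⟩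
  have L2 : ∑ k ∈ range (n + 1), ∑ q ∈ antidiagonal k, T q
      = ∑ q ∈ (range (n + 1) ×ˢ range (n + 1)).filter (fun q => q.1 + q.2 ≤ n), T q := by
    rw [← hbiU, Finset.sum_biUnion hdisj]
  have L3 : ∑ q ∈ (range (n + 1) ×ˢ range (n + 1)).filter (fun q => q.1 + q.2 ≤ n), T q
      = ∑ q ∈ range (n + 1) ×ˢ range (n + 1), T q := by
    apply Finset.sum_subset (Finset.filter_subset _ _)
    intro q hq hnq
    rw [Finset.mem_filter] at hnq
    push_neg at hnq
    exact hT0 q (hnq hq)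
  have L4 : ∑ q ∈ range (n + 1) ×ˢ range (n + 1), T q
      = ∑ r ∈ antidiagonal n, PowerSeries.coeff r.1 E * c r.2 := by
    have E1 : ∑ q ∈ range (n + 1) ×ˢ range (n + 1), T q
        = ∑ r ∈ antidiagonal n, ∑ a ∈ range (n + 1), ∑ b ∈ range (n + 1),
            ((a.factorial : ℚ_[p]))⁻¹ * ((b.factorial : ℚ_[p]))⁻¹ *
              (PowerSeries.coeff r.1 (f ^ a) * PowerSeries.coeff r.2 (g ^ b)) := by
      rw [Finset.sum_product]
      have hinner : ∀ a ∈ range (n + 1), (∑ b ∈ range (n + 1), T (a, b))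
          = ∑ r ∈ antidiagonal n, ∑ b ∈ range (n + 1),
              ((a.factorial : ℚ_[p]))⁻¹ * ((b.factorial : ℚ_[p]))⁻¹ *
                (PowerSeries.coeff r.1 (f ^ a) * PowerSeries.coeff r.2 (g ^ b)) := by
        intro a _
        have h1 : ∀ b ∈ range (n + 1), T (a, b) = ∑ r ∈ antidiagonal n,
            ((a.factorial : ℚ_[p]))⁻¹ * ((b.factorial : ℚ_[p]))⁻¹ *
              (PowerSeries.coeff r.1 (f ^ a) * PowerSeries.coeff r.2 (g ^ b)) := by
          intro b _
          simp only [hTdef]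
          rw [Finset.mul_sum]
        rw [Finset.sum_congr rfl h1]
        exact Finset.sum_comm
      rw [Finset.sum_congr rfl hinner]
      exact Finset.sum_comm
    have E2 : ∀ r ∈ antidiagonal n, PowerSeries.coeff r.1 E * c r.2
        = ∑ a ∈ range (n + 1), ∑ b ∈ range (n + 1),
            ((a.factorial : ℚ_[p]))⁻¹ * ((b.factorial : ℚ_[p]))⁻¹ *
              (PowerSeries.coeff r.1 (f ^ a) * PowerSeries.coeff r.2 (g ^ b)) := by
      intro r hr
      have hr1 : r.1 ≤ n := by have := Finset.HasAntidiagonal.mem_antidiagonal.mp hr; omega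
      have hEex : PowerSeries.coeff r.1 E
          = ∑ a ∈ range (n + 1), ((a.factorial : ℚ_[p]))⁻¹ * PowerSeries.coeff r.1 (f ^ a) := by
        rw [hE r.1]
        apply Finset.sum_subset
        · intro x hx; rw [Finset.mem_range] at *; omega
        · intro a ha hna
          have h2 : r.1 < a := by rw [Finset.mem_range] at ha hna; omega
          rw [aux_coeff_pow_eq_zero hf0 h2, mul_zero]
      rw [hEex]
      simp only [hcdef]
      rw [Finset.sum_mul_sum]
      exact Finset.sum_congr rfl fun a _ => Finset.sum_congr rfl fun b _ => by ring
    rw [E1, Finset.sum_congr rfl E2]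
  have key : PowerSeries.coeff n E'
      = ∑ r ∈ antidiagonal n, PowerSeries.coeff r.1 E * c r.2 :=
    L1.trans (L2.trans (L3.trans L4))
  rw [key]
  apply norm_sum_le_of_forall_le_of_nonneg zero_le_one
  intro r _
  rw [norm_mul]
  have hc : ‖c r.2‖ ≤ 1 := by
    apply norm_sum_le_of_forall_le_of_nonneg zero_le_one
    intro b _
    rw [norm_mul]
    calc ‖((b.factorial : ℚ_[p]))⁻¹‖ * ‖PowerSeries.coeff r.2 (g ^ b)‖
        ≤ ‖((b.factorial : ℚ_[p]))⁻¹‖ * ‖(p : ℚ_[p])‖ ^ b :=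
          mul_le_mul_of_nonneg_left (aux_norm_coeff_pow p g hgnorm b r.2) (norm_nonneg _)
      _ ≤ 1 := aux_fact_bound p b
  exact mul_le_one₀ (hEint r.1) (norm_nonneg _) hc
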